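/- The affine span over ℝ of V equals the affine hyperplane {x : EuclideanSpace ℝ (Fin 5) | (∑ i, x i) = 3}; in particular the rectified 5-cell convexHull ℝ V is a 4-dimensional polytope. -/

import Mathlib

noncomputable section

/-- The vertex set of the Euclidean rectified 5-cell: all coordinate
permutations of the point `(1,1,1,0,0)`. -/
def V : Set (EuclideanSpace ℝ (Fin 5)) :=
  {x | (∀ i, x i = 0 ∨ x i = 1) ∧ (∑ i, x i) = 3}

def sumF : EuclideanSpace ℝ (Fin 5) →ₗ[ℝ] ℝ where
  toFun x := ∑ i, x i
  map_add' x y := by simp [Finset.sum_add_distrib]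
  map_smul' c x := by simp [Finset.mul_sum]

def Hplane : AffineSubspace ℝ (EuclideanSpace ℝ (Fin 5)) where
  carrier := {x | (∑ i, x i) = 3}
  smul_vsub_vadd_mem' c p q r hp hq hr := by
    have h : (∑ i, (c • (p -ᵥ q) +ᵥ r) i) = c * (∑ i, p i) - c * (∑ i, q i) + ∑ i, r i := by
      simp [Finset.mul_sum, Finset.sum_add_distrib, Finset.sum_sub_distrib, mul_sub,
        smul_sub, sub_mul]
    simp only [Set.mem_setOf_eq] at *
    rw [h, hp, hq, hr]; ring

def pt (v : Fin 5 → ℝ) : EuclideanSpace ℝ (Fin 5) := (WithLp.equiv 2 (Fin 5 → ℝ)).symm v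

lemma pt_apply (v : Fin 5 → ℝ) (j : Fin 5) : pt v j = v j := rfl

lemma memV (v : Fin 5 → ℝ) (h1 : ∀ i, v i = 0 ∨ v i = 1)
    (h2 : v 0 + v 1 + v 2 + v 3 + v 4 = 3) : pt v ∈ V := by
  refine ⟨h1, ?_⟩
  simpa [pt, Fin.sum_univ_five] using h2

lemma p0_mem : pt ![1,1,1,0,0] ∈ V := by
  refine memV _ (fun i => by fin_cases i <;> simp) (by simp; norm_num)

lemma q0_mem : pt ![0,1,1,0,1] ∈ V := by
  refine memV _ (fun i => by fin_cases i <;> simp) (by simp; norm_num)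

lemma q1_mem : pt ![1,0,1,0,1] ∈ V := by
  refine memV _ (fun i => by fin_cases i <;> simp) (by simp; norm_num)

lemma q2_mem : pt ![1,1,0,0,1] ∈ V := by
  refine memV _ (fun i => by fin_cases i <;> simp) (by simp; norm_num)

lemma r3_mem : pt ![1,1,0,1,0] ∈ V := by
  refine memV _ (fun i => by fin_cases i <;> simp) (by simp; norm_num)

lemma ker_le_dir : (LinearMap.ker sumF : Submodule ℝ (EuclideanSpace ℝ (Fin 5))) ≤
    (affineSpan ℝ V).direction := by
  intro y hy
  have hy' : y 0 + y 1 + y 2 + y 3 + y 4 = 0 := by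
    simpa [sumF, Fin.sum_univ_five] using hy
  set D := (affineSpan ℝ V).direction
  have m : ∀ a b : EuclideanSpace ℝ (Fin 5), a ∈ V → b ∈ V → a - b ∈ D := fun a b ha hb =>
    AffineSubspace.vsub_mem_direction (subset_affineSpan ℝ V ha) (subset_affineSpan ℝ V hb)
  have h0 := m _ _ p0_mem q0_mem
  have h1 := m _ _ p0_mem q1_mem
  have h2 := m _ _ p0_mem q2_mem
  have h3 := m _ _ r3_mem q2_mem
  have key : y = y 0 • (pt ![1,1,1,0,0] - pt ![0,1,1,0,1])
      + y 1 • (pt ![1,1,1,0,0] - pt ![1,0,1,0,1])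
      + y 2 • (pt ![1,1,1,0,0] - pt ![1,1,0,0,1])
      + y 3 • (pt ![1,1,0,1,0] - pt ![1,1,0,0,1]) := by
    ext j
    simp only [PiLp.add_apply, PiLp.smul_apply, PiLp.sub_apply, pt_apply, smul_eq_mul]
    fin_cases j <;> simp <;> linarith
  rw [key]
  exact D.add_mem (D.add_mem (D.add_mem (D.smul_mem _ h0) (D.smul_mem _ h1))
    (D.smul_mem _ h2)) (D.smul_mem _ h3)

lemma dir_H : Hplane.direction = LinearMap.ker sumF := by
  apply le_antisymm
  · intro y hy
    rw [AffineSubspace.mem_direction_iff_eq_vsub ⟨pt ![1,1,1,0,0], by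
      show (∑ i, _) = 3; simp [pt, Fin.sum_univ_five]; norm_num⟩] at hy
    obtain ⟨p, hp, q, hq, rfl⟩ := hy
    have hp' : (∑ i, p i) = 3 := hp
    have hq' : (∑ i, q i) = 3 := hq
    simp only [LinearMap.mem_ker, sumF, LinearMap.coe_mk, AddHom.coe_mk]
    have : (∑ i, (p -ᵥ q : EuclideanSpace ℝ (Fin 5)) i) = (∑ i, p i) - ∑ i, q i := by
      simp [Finset.sum_sub_distrib]
    rw [this, hp', hq']; ring
  · intro y hy
    have hy' : (∑ i, y i) = 0 := hy
    have hp0 : pt ![1,1,1,0,0] ∈ Hplane := by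
      show (∑ i, _) = 3; simp [pt, Fin.sum_univ_five]; norm_num
    have hyp : y +ᵥ pt ![1,1,1,0,0] ∈ Hplane := by
      show (∑ i, (y +ᵥ pt ![1,1,1,0,0] : EuclideanSpace ℝ (Fin 5)) i) = 3
      have : (∑ i, (y + pt ![1,1,1,0,0] : EuclideanSpace ℝ (Fin 5)) i)
          = (∑ i, y i) + ∑ i, (pt ![1,1,1,0,0] : EuclideanSpace ℝ (Fin 5)) i := by
        simp [Finset.sum_add_distrib]
      rw [show (y +ᵥ pt ![1,1,1,0,0] : EuclideanSpace ℝ (Fin 5)) = y + pt ![1,1,1,0,0] from rfl,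
        this, hy']
      simp [pt, Fin.sum_univ_five]; norm_num
    have := AffineSubspace.vsub_mem_direction hyp hp0
    simpa using this

lemma rank_ker : Module.finrank ℝ (LinearMap.ker sumF) = 4 := by
  have hsur : Function.Surjective sumF := by
    intro r
    refine ⟨pt ![r,0,0,0,0], ?_⟩
    simp [sumF, pt, Fin.sum_univ_five]
  have h := LinearMap.finrank_range_add_finrank_ker sumF
  have hr : Module.finrank ℝ (LinearMap.range sumF) = 1 := by
    rw [LinearMap.range_eq_top.2 hsur]
    simp
  have htot : Module.finrank ℝ (EuclideanSpace ℝ (Fin 5)) = 5 := by simp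
  omega

/-- The affine span of `V` is the affine hyperplane `∑ i, x i = 3`; in
particular the rectified 5-cell `convexHull ℝ V` is 4-dimensional. -/
theorem affineSpan_rectified5cell :
    (affineSpan ℝ V : Set (EuclideanSpace ℝ (Fin 5))) =
      {x : EuclideanSpace ℝ (Fin 5) | (∑ i, x i) = 3} ∧
    Module.finrank ℝ (affineSpan ℝ V).direction = 4 := by
  have hVH : V ⊆ (Hplane : Set (EuclideanSpace ℝ (Fin 5))) := fun x hx => hx.2
  have hle : affineSpan ℝ V ≤ Hplane := affineSpan_le.2 hVH
  have hdir : (affineSpan ℝ V).direction = Hplane.direction := by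
    apply le_antisymm (AffineSubspace.direction_le hle)
    rw [dir_H]; exact ker_le_dir
  have heq : affineSpan ℝ V = Hplane := by
    apply AffineSubspace.ext_of_direction_eq hdir
    exact ⟨pt ![1,1,1,0,0], subset_affineSpan ℝ V p0_mem, hVH p0_mem⟩
  constructor
  · rw [heq]; rfl
  · rw [hdir, dir_H, rank_ker]
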